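/- Let C be a symmetric monoidal category with discarding, zero morphisms, and normalisation. Then pure states are closed under tensor: if ψ : I → A and φ : I → B are pure states, then ψ ⊗ φ : I → A ⊗ B (composed with the unitor I ≅ I ⊗ I) is pure. -/

import Mathlib

open CategoryTheory MonoidalCategory Limits

variable {C : Type*} [Category C] [MonoidalCategory C] [SymmetricCategory C]

/-- A state (or morphism into `A`) is causal when discarding it gives the
identity scalar. -/
def Causal (top : ∀ A : C, A ⟶ 𝟙_ C) {A : C} (σ : 𝟙_ C ⟶ A) : Prop :=
  σ ≫ top A = 𝟙 (𝟙_ C)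

/-- A state `ψ : I ⟶ A` is pure when `ψ = 0` or every dilation `ρ : I ⟶ A ⊗ E`
of `ψ` is of the form `ψ ⊗ₘ σ` (modulo the unitor) for some causal state `σ`. -/
def IsPureState [HasZeroMorphisms C] (top : ∀ A : C, A ⟶ 𝟙_ C) {A : C}
    (ψ : 𝟙_ C ⟶ A) : Prop :=
  ψ = 0 ∨ ∀ (E : C) (ρ : 𝟙_ C ⟶ A ⊗ E), ρ ≫ (𝟙 A ⊗ₘ top E) ≫ (ρ_ A).hom = ψ →
    ∃ σ : 𝟙_ C ⟶ E, Causal top σ ∧ ρ = (λ_ (𝟙_ C)).inv ≫ (ψ ⊗ₘ σ)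

/-- Normalisation: every non-zero state factors as a scalar followed by a unique
causal state. -/
def Normalisation [HasZeroMorphisms C] (top : ∀ A : C, A ⟶ 𝟙_ C) : Prop :=
  ∀ {A : C} (ρ : 𝟙_ C ⟶ A), ρ ≠ 0 →
    ∃ (r : 𝟙_ C ⟶ 𝟙_ C) (σ : 𝟙_ C ⟶ A), Causal top σ ∧ ρ = r ≫ σ ∧
      ∀ (r' : 𝟙_ C ⟶ 𝟙_ C) (σ' : 𝟙_ C ⟶ A), Causal top σ' → ρ = r' ≫ σ' → σ' = σ

namespace Stmt11Aux

lemma core_left (r : 𝟙_ C ⟶ 𝟙_ C) :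
    (λ_ (𝟙_ C)).inv ≫ (r ⊗ₘ 𝟙 (𝟙_ C)) = r ≫ (λ_ (𝟙_ C)).inv := by
  have h := rightUnitor_naturality (C := C) r
  rw [← tensorHom_id] at h
  calc (λ_ (𝟙_ C)).inv ≫ (r ⊗ₘ 𝟙 (𝟙_ C))
      = (λ_ (𝟙_ C)).inv ≫ ((r ⊗ₘ 𝟙 (𝟙_ C)) ≫ (ρ_ (𝟙_ C)).hom) ≫ (ρ_ (𝟙_ C)).inv := by
        simp
    _ = r ≫ (λ_ (𝟙_ C)).inv := by
        rw [h, unitors_inv_equal]; simp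

lemma core_right (s : 𝟙_ C ⟶ 𝟙_ C) :
    (λ_ (𝟙_ C)).inv ≫ (𝟙 (𝟙_ C) ⊗ₘ s) = s ≫ (λ_ (𝟙_ C)).inv := by
  have h := leftUnitor_naturality (C := C) s
  rw [← id_tensorHom] at h
  calc (λ_ (𝟙_ C)).inv ≫ (𝟙 (𝟙_ C) ⊗ₘ s)
      = (λ_ (𝟙_ C)).inv ≫ ((𝟙 (𝟙_ C) ⊗ₘ s) ≫ (λ_ (𝟙_ C)).hom) ≫ (λ_ (𝟙_ C)).inv := by
        simp
    _ = s ≫ (λ_ (𝟙_ C)).inv := by rw [h]; simp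

lemma sc_left {A B : C} (r : 𝟙_ C ⟶ 𝟙_ C) (f : 𝟙_ C ⟶ A) (g : 𝟙_ C ⟶ B) :
    (λ_ (𝟙_ C)).inv ≫ ((r ≫ f) ⊗ₘ g) = r ≫ (λ_ (𝟙_ C)).inv ≫ (f ⊗ₘ g) := by
  have : (r ≫ f) ⊗ₘ g = (r ⊗ₘ 𝟙 (𝟙_ C)) ≫ (f ⊗ₘ g) := by
    rw [tensorHom_comp_tensorHom, Category.id_comp]
  rw [this, ← Category.assoc, core_left, Category.assoc]

lemma sc_right {A B : C} (s : 𝟙_ C ⟶ 𝟙_ C) (f : 𝟙_ C ⟶ A) (g : 𝟙_ C ⟶ B) :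
    (λ_ (𝟙_ C)).inv ≫ (f ⊗ₘ (s ≫ g)) = s ≫ (λ_ (𝟙_ C)).inv ≫ (f ⊗ₘ g) := by
  have : f ⊗ₘ (s ≫ g) = (𝟙 (𝟙_ C) ⊗ₘ s) ≫ (f ⊗ₘ g) := by
    rw [tensorHom_comp_tensorHom, Category.id_comp]
  rw [this, ← Category.assoc, core_right, Category.assoc]

lemma scalars_comm (r s : 𝟙_ C ⟶ 𝟙_ C) : r ≫ s = s ≫ r := by
  have e1 : r ⊗ₘ s = (r ⊗ₘ 𝟙 (𝟙_ C)) ≫ (𝟙 (𝟙_ C) ⊗ₘ s) := by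
    rw [tensorHom_comp_tensorHom]; simp
  have e2 : r ⊗ₘ s = (𝟙 (𝟙_ C) ⊗ₘ s) ≫ (r ⊗ₘ 𝟙 (𝟙_ C)) := by
    rw [tensorHom_comp_tensorHom]; simp
  have h1 : (λ_ (𝟙_ C)).inv ≫ (r ⊗ₘ s) ≫ (λ_ (𝟙_ C)).hom = r ≫ s := by
    rw [e1]
    simp only [Category.assoc]
    rw [reassoc_of% core_left (C := C) r, reassoc_of% core_right (C := C) s]
    simp
  have h2 : (λ_ (𝟙_ C)).inv ≫ (r ⊗ₘ s) ≫ (λ_ (𝟙_ C)).hom = s ≫ r := by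
    rw [e2]
    simp only [Category.assoc]
    rw [reassoc_of% core_right (C := C) s, reassoc_of% core_left (C := C) r]
    simp
  rw [← h1, h2]

lemma core3 {A : C} (f : 𝟙_ C ⟶ A) :
    (λ_ (𝟙_ C)).inv ≫ (f ⊗ₘ 𝟙 (𝟙_ C)) ≫ (ρ_ A).hom = f := by
  rw [tensorHom_id, rightUnitor_naturality, unitors_inv_equal]
  simp

lemma core4 {B : C} (g : 𝟙_ C ⟶ B) :
    (λ_ (𝟙_ C)).inv ≫ (𝟙 (𝟙_ C) ⊗ₘ g) ≫ (λ_ B).hom = g := by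
  rw [id_tensorHom, leftUnitor_naturality]
  simp

variable (top : ∀ A : C, A ⟶ 𝟙_ C)

lemma marg_top (htop_tensor : ∀ A B : C, top (A ⊗ B) = (top A ⊗ₘ top B) ≫ (λ_ (𝟙_ C)).hom)
    (X E : C) :
    (𝟙 X ⊗ₘ top E) ≫ (ρ_ X).hom ≫ top X = top (X ⊗ E) := by
  have h : (ρ_ X).hom ≫ top X = (top X ⊗ₘ 𝟙 (𝟙_ C)) ≫ (ρ_ (𝟙_ C)).hom := by
    rw [tensorHom_id, rightUnitor_naturality]
  rw [h, ← Category.assoc, tensorHom_comp_tensorHom, Category.id_comp, Category.comp_id,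
    htop_tensor, ← unitors_equal]

lemma M1b (A B E : C) :
    (α_ A B E).hom ≫ (𝟙 A ⊗ₘ ((𝟙 B ⊗ₘ top E) ≫ (ρ_ B).hom)) =
      (𝟙 (A ⊗ B) ⊗ₘ top E) ≫ (ρ_ (A ⊗ B)).hom := by
  have e : 𝟙 A ⊗ₘ ((𝟙 B ⊗ₘ top E) ≫ (ρ_ B).hom)
      = (𝟙 A ⊗ₘ (𝟙 B ⊗ₘ top E)) ≫ (𝟙 A ⊗ₘ (ρ_ B).hom) := by
    rw [tensorHom_comp_tensorHom, Category.id_comp]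
  rw [e, ← Category.assoc, ← associator_naturality, Category.assoc, id_tensorHom_id,
    rightUnitor_tensor_hom]
  simp

lemma tensor_causal
    (htop_tensor : ∀ A B : C, top (A ⊗ B) = (top A ⊗ₘ top B) ≫ (λ_ (𝟙_ C)).hom)
    {A B : C} {f : 𝟙_ C ⟶ A} {g : 𝟙_ C ⟶ B}
    (hf : f ≫ top A = 𝟙 (𝟙_ C)) (hg : g ≫ top B = 𝟙 (𝟙_ C)) :
    ((λ_ (𝟙_ C)).inv ≫ (f ⊗ₘ g)) ≫ top (A ⊗ B) = 𝟙 (𝟙_ C) := by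
  rw [htop_tensor, Category.assoc, ← Category.assoc (f ⊗ₘ g), tensorHom_comp_tensorHom, hf, hg, id_tensorHom_id]
  simp

lemma extract {A B : C} {f : 𝟙_ C ⟶ A}
    (hf : f ≫ top A = 𝟙 (𝟙_ C)) (x : 𝟙_ C ⟶ B) :
    (λ_ (𝟙_ C)).inv ≫ (f ⊗ₘ x) ≫ (top A ⊗ₘ 𝟙 B) ≫ (λ_ B).hom = x := by
  have h : (f ⊗ₘ x) ≫ (top A ⊗ₘ 𝟙 B) = (𝟙 (𝟙_ C) ⊗ₘ x) := by
    rw [tensorHom_comp_tensorHom, hf, Category.comp_id]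
  rw [← Category.assoc (f ⊗ₘ x), h, core4]

lemma L9 {A B E : C} (f : 𝟙_ C ⟶ A) (g : 𝟙_ C ⟶ B) (h : 𝟙_ C ⟶ E) :
    ((λ_ (𝟙_ C)).inv ≫ (f ⊗ₘ ((λ_ (𝟙_ C)).inv ≫ (g ⊗ₘ h)))) ≫ (α_ A B E).inv
      = (λ_ (𝟙_ C)).inv ≫ (((λ_ (𝟙_ C)).inv ≫ (f ⊗ₘ g)) ⊗ₘ h) := by
  have e1 : f ⊗ₘ ((λ_ (𝟙_ C)).inv ≫ (g ⊗ₘ h))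
      = (𝟙 (𝟙_ C) ⊗ₘ (λ_ (𝟙_ C)).inv) ≫ (f ⊗ₘ (g ⊗ₘ h)) := by
    rw [tensorHom_comp_tensorHom, Category.id_comp]
  have e2 : ((λ_ (𝟙_ C)).inv ≫ (f ⊗ₘ g)) ⊗ₘ h
      = ((λ_ (𝟙_ C)).inv ⊗ₘ 𝟙 (𝟙_ C)) ≫ ((f ⊗ₘ g) ⊗ₘ h) := by
    rw [tensorHom_comp_tensorHom, Category.id_comp]
  have e3 : (f ⊗ₘ (g ⊗ₘ h)) ≫ (α_ A B E).inv = (α_ (𝟙_ C) (𝟙_ C) (𝟙_ C)).inv ≫ ((f ⊗ₘ g) ⊗ₘ h) :=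
    associator_inv_naturality f g h
  have struct : (λ_ (𝟙_ C)).inv ≫ (𝟙 (𝟙_ C) ⊗ₘ (λ_ (𝟙_ C)).inv) ≫ (α_ (𝟙_ C) (𝟙_ C) (𝟙_ C)).inv
      = (λ_ (𝟙_ C)).inv ≫ ((λ_ (𝟙_ C)).inv ⊗ₘ 𝟙 (𝟙_ C)) := by
    coherence
  calc ((λ_ (𝟙_ C)).inv ≫ (f ⊗ₘ ((λ_ (𝟙_ C)).inv ≫ (g ⊗ₘ h)))) ≫ (α_ A B E).inv
      = (λ_ (𝟙_ C)).inv ≫ (𝟙 (𝟙_ C) ⊗ₘ (λ_ (𝟙_ C)).inv) ≫ ((f ⊗ₘ (g ⊗ₘ h)) ≫ (α_ A B E).inv) := by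
        rw [e1]; simp only [Category.assoc]
    _ = ((λ_ (𝟙_ C)).inv ≫ (𝟙 (𝟙_ C) ⊗ₘ (λ_ (𝟙_ C)).inv) ≫ (α_ (𝟙_ C) (𝟙_ C) (𝟙_ C)).inv)
          ≫ ((f ⊗ₘ g) ⊗ₘ h) := by rw [e3]; simp only [Category.assoc]
    _ = ((λ_ (𝟙_ C)).inv ≫ ((λ_ (𝟙_ C)).inv ⊗ₘ 𝟙 (𝟙_ C))) ≫ ((f ⊗ₘ g) ⊗ₘ h) := by rw [struct]
    _ = (λ_ (𝟙_ C)).inv ≫ (((λ_ (𝟙_ C)).inv ≫ (f ⊗ₘ g)) ⊗ₘ h) := by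
        rw [e2]; simp only [Category.assoc]

end Stmt11Aux

open Stmt11Aux

set_option maxHeartbeats 1600000 in
/-- In a symmetric monoidal category with discarding, zero
morphisms and normalisation, pure states are closed under tensor: if `ψ` and `φ`
are pure states then so is `ψ ⊗ₘ φ` (composed with the unitor `I ≅ I ⊗ₘ I`). -/
theorem stmt_11 [HasZeroMorphisms C] (top : ∀ A : C, A ⟶ 𝟙_ C)
    (htop_tensor : ∀ A B : C, top (A ⊗ B) = (top A ⊗ₘ top B) ≫ (λ_ (𝟙_ C)).hom)
    (htop_unit : top (𝟙_ C) = 𝟙 (𝟙_ C))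
    (hnorm : Normalisation top)
    {A B : C} (ψ : 𝟙_ C ⟶ A) (φ : 𝟙_ C ⟶ B)
    (hψ : IsPureState top ψ) (hφ : IsPureState top φ) :
    IsPureState top ((λ_ (𝟙_ C)).inv ≫ (ψ ⊗ₘ φ)) := by
  by_cases hχ0 : (λ_ (𝟙_ C)).inv ≫ (ψ ⊗ₘ φ) = 0
  · exact Or.inl hχ0
  right
  -- both factors are nonzero
  have hψ0 : ψ ≠ 0 := by
    rintro rfl
    apply hχ0
    rw [show (0 : 𝟙_ C ⟶ A) = (0 : 𝟙_ C ⟶ 𝟙_ C) ≫ (0 : 𝟙_ C ⟶ A) from (zero_comp).symm,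
      sc_left, zero_comp]
  have hφ0 : φ ≠ 0 := by
    rintro rfl
    apply hχ0
    rw [show (0 : 𝟙_ C ⟶ B) = (0 : 𝟙_ C ⟶ 𝟙_ C) ≫ (0 : 𝟙_ C ⟶ B) from (zero_comp).symm,
      sc_right, zero_comp]
  have Pψ := hψ.resolve_left hψ0
  have Pφ := hφ.resolve_left hφ0
  obtain ⟨r, ψ₀, hψ₀c, hψf, -⟩ := hnorm ψ hψ0
  obtain ⟨s, φ₀, hφ₀c, hφf, -⟩ := hnorm φ hφ0
  have hψ₀c' : ψ₀ ≫ top A = 𝟙 (𝟙_ C) := hψ₀c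
  have hφ₀c' : φ₀ ≫ top B = 𝟙 (𝟙_ C) := hφ₀c
  -- the tensor factorises through the causal state χ₀
  have hχfac : (λ_ (𝟙_ C)).inv ≫ (ψ ⊗ₘ φ)
      = (r ≫ s) ≫ ((λ_ (𝟙_ C)).inv ≫ (ψ₀ ⊗ₘ φ₀)) := by
    rw [hψf, hφf, sc_left, sc_right]
    simp only [Category.assoc]
  have hχ₀c : ((λ_ (𝟙_ C)).inv ≫ (ψ₀ ⊗ₘ φ₀)) ≫ top (A ⊗ B) = 𝟙 (𝟙_ C) :=
    tensor_causal top htop_tensor hψ₀c' hφ₀c'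
  intro E ρ hρm
  have hρ0 : ρ ≠ 0 := by
    rintro rfl
    rw [zero_comp] at hρm
    exact hχ0 hρm.symm
  obtain ⟨c, ρ₀, hρ₀c, hρf, -⟩ := hnorm ρ hρ0
  have hρ₀c' : ρ₀ ≫ top ((A ⊗ B) ⊗ E) = 𝟙 (𝟙_ C) := hρ₀c
  -- the marginal of ρ₀ is causal
  have hmc : (ρ₀ ≫ (𝟙 (A ⊗ B) ⊗ₘ top E) ≫ (ρ_ (A ⊗ B)).hom) ≫ top (A ⊗ B) = 𝟙 (𝟙_ C) := by
    simp only [Category.assoc]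
    rw [marg_top top htop_tensor]
    exact hρ₀c'
  -- identify the marginal of ρ₀ with χ₀
  have hχm : ρ₀ ≫ (𝟙 (A ⊗ B) ⊗ₘ top E) ≫ (ρ_ (A ⊗ B)).hom
      = (λ_ (𝟙_ C)).inv ≫ (ψ₀ ⊗ₘ φ₀) := by
    obtain ⟨d, κ, hκc, hκf, hκu⟩ := hnorm _ hχ0
    have h1 := hκu (r ≫ s) _ hχ₀c hχfac
    have h2 := hκu c _ hmc (by rw [← hρm, hρf]; simp only [Category.assoc])
    rw [h2, ← h1]
  -- apply purity of ψ to r ≫ ρ₀ ≫ α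
  have hPm : (r ≫ ρ₀ ≫ (α_ A B E).hom) ≫ (𝟙 A ⊗ₘ top (B ⊗ E)) ≫ (ρ_ A).hom = ψ := by
    have ht : (𝟙 A ⊗ₘ top (B ⊗ E))
        = (𝟙 A ⊗ₘ ((𝟙 B ⊗ₘ top E) ≫ (ρ_ B).hom)) ≫ (𝟙 A ⊗ₘ top B) := by
      rw [tensorHom_comp_tensorHom, Category.id_comp, Category.assoc, marg_top top htop_tensor]
    rw [ht]
    simp only [Category.assoc]
    rw [reassoc_of% M1b top A B E, reassoc_of% hχm]
    have h2 : (ψ₀ ⊗ₘ φ₀) ≫ (𝟙 A ⊗ₘ top B) = ψ₀ ⊗ₘ 𝟙 (𝟙_ C) := by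
      rw [tensorHom_comp_tensorHom, Category.comp_id, hφ₀c']
    rw [← Category.assoc (ψ₀ ⊗ₘ φ₀), h2, core3, ← hψf]
  obtain ⟨τ, hτc, hP⟩ := Pψ (B ⊗ E) _ hPm
  have hτc' : τ ≫ top (B ⊗ E) = 𝟙 (𝟙_ C) := hτc
  -- the B-marginal μ of τ is causal
  have hμc : (τ ≫ (𝟙 B ⊗ₘ top E) ≫ (ρ_ B).hom) ≫ top B = 𝟙 (𝟙_ C) := by
    simp only [Category.assoc]
    rw [marg_top top htop_tensor]
    exact hτc'
  -- identify μ with φ₀ via normalisation uniqueness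
  have hstar : r ≫ ((λ_ (𝟙_ C)).inv ≫ (ψ₀ ⊗ₘ φ₀))
      = (λ_ (𝟙_ C)).inv ≫ (ψ ⊗ₘ (τ ≫ (𝟙 B ⊗ₘ top E) ≫ (ρ_ B).hom)) := by
    have h := congrArg (fun t => t ≫ (𝟙 A ⊗ₘ ((𝟙 B ⊗ₘ top E) ≫ (ρ_ B).hom))) hP
    simp only [Category.assoc] at h
    rw [M1b top A B E] at h
    try simp only [Category.assoc] at h
    rw [hχm] at h
    have h2 : (ψ ⊗ₘ τ) ≫ (𝟙 A ⊗ₘ ((𝟙 B ⊗ₘ top E) ≫ (ρ_ B).hom))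
        = ψ ⊗ₘ (τ ≫ (𝟙 B ⊗ₘ top E) ≫ (ρ_ B).hom) := by
      rw [tensorHom_comp_tensorHom, Category.comp_id]
    rw [h2] at h
    exact h
  have hν0 : (λ_ (𝟙_ C)).inv ≫ (ψ ⊗ₘ φ₀) ≠ 0 := by
    intro h
    apply hχ0
    rw [hφf, sc_right, h, comp_zero]
  have hμφ₀ : (λ_ (𝟙_ C)).inv ≫ (ψ₀ ⊗ₘ (τ ≫ (𝟙 B ⊗ₘ top E) ≫ (ρ_ B).hom))
      = (λ_ (𝟙_ C)).inv ≫ (ψ₀ ⊗ₘ φ₀) := by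
    obtain ⟨d, κ, hκc, hκf, hκu⟩ := hnorm _ hν0
    have h1 := hκu r _ (tensor_causal top htop_tensor hψ₀c' hφ₀c')
      (by rw [hψf, sc_left])
    have h2 := hκu r _ (tensor_causal top htop_tensor hψ₀c' hμc)
      (by
        calc (λ_ (𝟙_ C)).inv ≫ (ψ ⊗ₘ φ₀)
            = r ≫ ((λ_ (𝟙_ C)).inv ≫ (ψ₀ ⊗ₘ φ₀)) := by rw [hψf, sc_left]
          _ = (λ_ (𝟙_ C)).inv ≫ (ψ ⊗ₘ (τ ≫ (𝟙 B ⊗ₘ top E) ≫ (ρ_ B).hom)) := hstar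
          _ = r ≫ ((λ_ (𝟙_ C)).inv
                ≫ (ψ₀ ⊗ₘ (τ ≫ (𝟙 B ⊗ₘ top E) ≫ (ρ_ B).hom))) := by rw [hψf, sc_left])
    rw [h2, ← h1]
  -- extract the identification of the marginal of τ with φ₀
  have hμφ : τ ≫ (𝟙 B ⊗ₘ top E) ≫ (ρ_ B).hom = φ₀ := by
    have h := congrArg (fun t => t ≫ ((top A ⊗ₘ 𝟙 B) ≫ (λ_ B).hom)) hμφ₀
    simp only [Category.assoc] at h
    rw [extract top hψ₀c', extract top hψ₀c'] at h
    exact h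
  -- apply purity of φ to s ≫ τ
  have hQm : (s ≫ τ) ≫ (𝟙 B ⊗ₘ top E) ≫ (ρ_ B).hom = φ := by
    simp only [Category.assoc]
    rw [hμφ, ← hφf]
  obtain ⟨σ, hσc, hQ⟩ := Pφ E _ hQm
  have hσc' : σ ≫ top E = 𝟙 (𝟙_ C) := hσc
  -- assemble everything
  have hΘc : ((λ_ (𝟙_ C)).inv ≫ (((λ_ (𝟙_ C)).inv ≫ (ψ₀ ⊗ₘ φ₀)) ⊗ₘ σ)) ≫ top ((A ⊗ B) ⊗ E)
      = 𝟙 (𝟙_ C) := tensor_causal top htop_tensor hχ₀c hσc'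
  have hQ' : s ≫ τ = s ≫ ((λ_ (𝟙_ C)).inv ≫ (φ₀ ⊗ₘ σ)) := by
    rw [hQ, hφf, sc_left]
  have hfin0 : s ≫ r ≫ ρ₀ ≫ (α_ A B E).hom
      = s ≫ r ≫ ((λ_ (𝟙_ C)).inv ≫ (ψ₀ ⊗ₘ ((λ_ (𝟙_ C)).inv ≫ (φ₀ ⊗ₘ σ)))) := by
    have h := congrArg (fun t => s ≫ t) hP
    rw [h]
    calc s ≫ (λ_ (𝟙_ C)).inv ≫ (ψ ⊗ₘ τ)
        = (λ_ (𝟙_ C)).inv ≫ (ψ ⊗ₘ (s ≫ τ)) := by rw [sc_right]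
      _ = (λ_ (𝟙_ C)).inv ≫ (ψ ⊗ₘ (s ≫ ((λ_ (𝟙_ C)).inv ≫ (φ₀ ⊗ₘ σ)))) := by rw [hQ']
      _ = s ≫ (λ_ (𝟙_ C)).inv ≫ (ψ ⊗ₘ ((λ_ (𝟙_ C)).inv ≫ (φ₀ ⊗ₘ σ))) := by rw [sc_right]
      _ = s ≫ r ≫ ((λ_ (𝟙_ C)).inv ≫ (ψ₀ ⊗ₘ ((λ_ (𝟙_ C)).inv ≫ (φ₀ ⊗ₘ σ)))) := by
          rw [hψf, sc_left]
  have hfin : (s ≫ r) ≫ ρ₀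
      = (s ≫ r) ≫ ((λ_ (𝟙_ C)).inv ≫ (((λ_ (𝟙_ C)).inv ≫ (ψ₀ ⊗ₘ φ₀)) ⊗ₘ σ)) := by
    have h := congrArg (fun t => t ≫ (α_ A B E).inv) hfin0
    simp only [Category.assoc, Iso.hom_inv_id, Category.comp_id] at h
    have l9 : (λ_ (𝟙_ C)).inv ≫ (ψ₀ ⊗ₘ ((λ_ (𝟙_ C)).inv ≫ (φ₀ ⊗ₘ σ))) ≫ (α_ A B E).inv
        = (λ_ (𝟙_ C)).inv ≫ (((λ_ (𝟙_ C)).inv ≫ (ψ₀ ⊗ₘ φ₀)) ⊗ₘ σ) := by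
      rw [← Category.assoc]
      exact L9 ψ₀ φ₀ σ
    rw [l9] at h
    simpa only [Category.assoc] using h
  have hw0 : (s ≫ r) ≫ ρ₀ ≠ 0 := by
    intro h
    apply hχ0
    have e : (λ_ (𝟙_ C)).inv ≫ (ψ ⊗ₘ φ)
        = ((s ≫ r) ≫ ρ₀) ≫ ((𝟙 (A ⊗ B) ⊗ₘ top E) ≫ (ρ_ (A ⊗ B)).hom) := by
      rw [hχfac, scalars_comm r s]
      simp only [Category.assoc]
      rw [hχm]
    rw [e, h, zero_comp]
  obtain ⟨d', κ', hκ'c, hκ'f, hκ'u⟩ := hnorm _ hw0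
  have e1 := hκ'u (s ≫ r) ρ₀ hρ₀c rfl
  have e2 := hκ'u (s ≫ r) _ (hΘc) hfin
  have hρ₀Θ : ρ₀ = (λ_ (𝟙_ C)).inv ≫ (((λ_ (𝟙_ C)).inv ≫ (ψ₀ ⊗ₘ φ₀)) ⊗ₘ σ) :=
    e1.trans e2.symm
  have hcχ : (λ_ (𝟙_ C)).inv ≫ (ψ ⊗ₘ φ) = c ≫ ((λ_ (𝟙_ C)).inv ≫ (ψ₀ ⊗ₘ φ₀)) := by
    rw [← hρm, hρf]
    simp only [Category.assoc]
    rw [hχm]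
  refine ⟨σ, hσc, ?_⟩
  rw [hρf, hρ₀Θ, hcχ, sc_left]
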